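/- Every integer-valued ternary quadratic form A (a 3×3 symmetric matrix with integer diagonal entries and half-integer off-diagonal entries) with det(A) = −1/4 is SL₃(ℤ)-equivalent to A₀ = [[0, −1/2, 0],[−1/2, 0, 0],[0, 0, 1]]; i.e., there exists g ∈ SL₃(ℤ) with g A gᵗ = A₀. -/

import Mathlib

set_option maxHeartbeats 1000000

open Matrix

lemma round_div_pos (A B : ℤ) (hA : 0 < A) : ∃ Y : ℤ, 2 * |A * Y + B| ≤ A := by
  have h0 : 0 ≤ B % A := Int.emod_nonneg B (ne_of_gt hA)
  have h1 : B % A < A := Int.emod_lt_of_pos B hA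
  have hd : B % A = B - A * (B / A) := Int.emod_def B A
  by_cases hc : 2 * (B % A) ≤ A
  · refine ⟨-(B / A), ?_⟩
    have e : A * (-(B / A)) + B = B % A := by rw [hd]; ring
    rw [e, abs_of_nonneg h0]; exact hc
  · refine ⟨-(B / A) - 1, ?_⟩
    have e : A * (-(B / A) - 1) + B = B % A - A := by rw [hd]; ring
    rw [e, abs_of_nonpos (by omega)]; omega

/-- Centered division: choose `Y` with `2|A*Y + B| ≤ |A|`. -/
lemma round_div (A B : ℤ) (hA : A ≠ 0) : ∃ Y : ℤ, 2 * |A * Y + B| ≤ |A| := by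
  rcases hA.lt_or_gt with h | h
  · obtain ⟨Y, hY⟩ := round_div_pos (-A) B (by omega)
    refine ⟨-Y, ?_⟩
    have e : A * (-Y) + B = -A * Y + B := by ring
    rw [e, abs_of_neg h]; exact hY
  · obtain ⟨Y, hY⟩ := round_div_pos A B h
    refine ⟨Y, ?_⟩
    rw [abs_of_pos h]; exact hY

lemma bezout (a b : ℤ) : ∃ u v : ℤ, a * u + b * v = Int.gcd a b :=
  ⟨Int.gcdA a b, Int.gcdB a b, (Int.gcd_eq_gcd_ab a b).symm⟩

lemma gcd3_split (a b c : ℤ) (h : ¬(a = 0 ∧ b = 0 ∧ c = 0)) :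
    ∃ k a' b' c' : ℤ, 0 < k ∧ a = k * a' ∧ b = k * b' ∧ c = k * c' ∧
      Int.gcd a' (Int.gcd b' c') = 1 := by
  set K : ℕ := Int.gcd a (Int.gcd b c) with hK
  have hKpos : 0 < K := by
    rcases Nat.eq_zero_or_pos K with h0 | h0
    · exfalso
      have h1 := Int.gcd_eq_zero_iff.mp h0
      have h2 : (Int.gcd b c : ℤ) = 0 := h1.2
      have h3 : Int.gcd b c = 0 := by exact_mod_cast h2
      have h4 := Int.gcd_eq_zero_iff.mp h3
      exact h ⟨h1.1, h4.1, h4.2⟩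
    · exact h0
  have hga : (K:ℤ) ∣ a := Int.gcd_dvd_left _ _
  have hgg : (K:ℤ) ∣ (Int.gcd b c : ℤ) := Int.gcd_dvd_right _ _
  have hgb : (K:ℤ) ∣ b := hgg.trans (Int.gcd_dvd_left _ _)
  have hgc : (K:ℤ) ∣ c := hgg.trans (Int.gcd_dvd_right _ _)
  refine ⟨(K:ℤ), a / K, b / K, c / K, by exact_mod_cast hKpos,
    (Int.mul_ediv_cancel' hga).symm, (Int.mul_ediv_cancel' hgb).symm,
    (Int.mul_ediv_cancel' hgc).symm, ?_⟩
  have hbc : Int.gcd (b / K) (c / K) = Int.gcd b c / K := by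
    rw [Int.gcd_div hgb hgc, Int.natAbs_natCast]
  rw [hbc]
  have hcast : ((Int.gcd b c / K : ℕ) : ℤ) = (Int.gcd b c : ℤ) / (K : ℤ) := by
    exact Int.natCast_div _ _
  rw [hcast, Int.gcd_div hga hgg, Int.natAbs_natCast, ← hK]
  exact Nat.div_self hKpos

/-- Any primitive vector in `ℤ³` is the first row of a matrix of determinant 1. -/
lemma prim_ext3 (a b c : ℤ) (h : Int.gcd a (Int.gcd b c) = 1) :
    ∃ g : Matrix (Fin 3) (Fin 3) ℤ, g.det = 1 ∧ g 0 0 = a ∧ g 0 1 = b ∧ g 0 2 = c := by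
  by_cases hbc : b = 0 ∧ c = 0
  · obtain ⟨hb, hc⟩ := hbc
    subst hb; subst hc
    have h1 : a.natAbs = 1 := by simpa using h
    have h2 : a = 1 ∨ a = -1 := Int.natAbs_eq_iff.mp h1 |>.imp (by simp) (by simp)
    refine ⟨!![a, 0, 0; 0, a, 0; 0, 0, 1], ?_, by simp, by simp, by simp⟩
    rcases h2 with h2 | h2 <;> subst h2 <;> simp [Matrix.det_fin_three]
  · set G : ℕ := Int.gcd b c with hG
    have hGpos : 0 < G := Int.gcd_pos_iff.mpr (by tauto)
    have hGz : (G:ℤ) ≠ 0 := by exact_mod_cast hGpos.ne'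
    obtain ⟨s, t, hst⟩ := bezout b c
    obtain ⟨u, v, huv⟩ := bezout a (G:ℤ)
    rw [h] at huv
    have hdb : (G:ℤ) ∣ b := Int.gcd_dvd_left _ _
    have hdc : (G:ℤ) ∣ c := Int.gcd_dvd_right _ _
    -- coprimality of s, t
    have hco : (b / G) * s + (c / G) * t = 1 := by
      apply mul_left_cancel₀ hGz
      rw [mul_add, mul_one, ← mul_assoc, ← mul_assoc, Int.mul_ediv_cancel' hdb,
        Int.mul_ediv_cancel' hdc]
      exact hst
    refine ⟨!![a, b, c; 0, -t, s; v, -u * (b / G), -u * (c / G)], ?_, by simp, by simp, by simp⟩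
    simp [Matrix.det_fin_three]
    linear_combination (a*u)*hco + v*hst + huv

/-- Binary Hermite bound: some nonzero integer vector has small value. -/
lemma bin_min (A B C : ℤ) : ∃ y z : ℤ, ¬(y = 0 ∧ z = 0) ∧
    3 * (A * y ^ 2 + 2 * B * y * z + C * z ^ 2) ^ 2 ≤ 4 * |A * C - B ^ 2| := by
  by_cases hiso : ∃ y z : ℤ, ¬(y = 0 ∧ z = 0) ∧ A * y ^ 2 + 2 * B * y * z + C * z ^ 2 = 0
  · obtain ⟨y, z, hyz, h0⟩ := hiso
    exact ⟨y, z, hyz, by rw [h0]; positivity⟩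
  push_neg at hiso
  set S : Set ℕ := {n | ∃ y z : ℤ, ¬(y = 0 ∧ z = 0) ∧
    (A * y ^ 2 + 2 * B * y * z + C * z ^ 2).natAbs = n} with hS
  have hne : S.Nonempty := ⟨A.natAbs, 1, 0, by simp, by ring_nf⟩
  obtain ⟨y₀, z₀, h0, hM⟩ := Nat.sInf_mem hne
  set M : ℕ := sInf S with hMdef
  set m : ℤ := (M : ℤ) with hm
  have habs0 : |A * y₀ ^ 2 + 2 * B * y₀ * z₀ + C * z₀ ^ 2| = m := by
    rw [← Int.natCast_natAbs, hM]
  have hmin : ∀ y z : ℤ, ¬(y = 0 ∧ z = 0) →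
      m ≤ |A * y ^ 2 + 2 * B * y * z + C * z ^ 2| := by
    intro y z hyz
    have : M ≤ (A * y ^ 2 + 2 * B * y * z + C * z ^ 2).natAbs :=
      Nat.sInf_le ⟨y, z, hyz, rfl⟩
    rw [← Int.natCast_natAbs, hm]
    exact_mod_cast this
  have hmpos : 1 ≤ m := by
    rcases Nat.eq_zero_or_pos M with h | h
    · exfalso
      apply hiso y₀ z₀ (fun hy hz => h0 ⟨hy, hz⟩)
      have : (A * y₀ ^ 2 + 2 * B * y₀ * z₀ + C * z₀ ^ 2).natAbs = 0 := by rw [hM, h]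
      exact Int.natAbs_eq_zero.mp this
    · have h1 : 1 ≤ M := h
      rw [hm]
      exact_mod_cast h1
  -- make the minimizer primitive
  obtain ⟨k, a', y₁, z₁, hk, ha', hy₁, hz₁, hgcd⟩ :=
    gcd3_split 0 y₀ z₀ (by rintro ⟨-, hy, hz⟩; exact h0 ⟨hy, hz⟩)
  have ha0 : a' = 0 := by
    rcases mul_eq_zero.mp ha'.symm with h | h
    · exact absurd h hk.ne'
    · exact h
  have hgcd1 : Int.gcd y₁ z₁ = 1 := by
    rw [ha0] at hgcd
    simpa using hgcd
  have h1ne : ¬(y₁ = 0 ∧ z₁ = 0) := by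
    rintro ⟨h1, h2⟩
    exact h0 ⟨by rw [hy₁, h1, mul_zero], by rw [hz₁, h2, mul_zero]⟩
  have hscale : A * y₀ ^ 2 + 2 * B * y₀ * z₀ + C * z₀ ^ 2 =
      k ^ 2 * (A * y₁ ^ 2 + 2 * B * y₁ * z₁ + C * z₁ ^ 2) := by
    rw [hy₁, hz₁]; ring
  set A' : ℤ := A * y₁ ^ 2 + 2 * B * y₁ * z₁ + C * z₁ ^ 2 with hA'
  have hminA' : m ≤ |A'| := hmin y₁ z₁ h1ne
  have habs1 : |A'| = m := by
    have e1 : m = k ^ 2 * |A'| := by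
      rw [← habs0, hscale, abs_mul, abs_of_nonneg (by positivity : (0:ℤ) ≤ k ^ 2)]
    have hk1 : (1:ℤ) ≤ k := hk
    have hk2 : 1 ≤ k ^ 2 := by
      calc (1:ℤ) = 1 * 1 := (one_mul 1).symm
      _ ≤ k * k := mul_le_mul hk1 hk1 zero_le_one (by linarith)
      _ = k ^ 2 := (sq k).symm
    have e2 : 1 * |A'| ≤ k ^ 2 * |A'| := mul_le_mul_of_nonneg_right hk2 (abs_nonneg A')
    have e3 : |A'| ≤ m := by linarith
    exact le_antisymm e3 hminA'
  -- change of basis sending (1,0) to (y₁,z₁)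
  obtain ⟨u, v, huv⟩ := bezout y₁ z₁
  rw [hgcd1] at huv
  set s : ℤ := -v with hs
  set t : ℤ := u with ht
  have hts : y₁ * t - z₁ * s = 1 := by rw [hs]; push_cast at huv; linarith
  set B' : ℤ := A * y₁ * s + B * (y₁ * t + z₁ * s) + C * z₁ * t with hB'
  set C' : ℤ := A * s ^ 2 + 2 * B * s * t + C * t ^ 2 with hC'
  have hdisc : A' * C' - B' ^ 2 = A * C - B ^ 2 := by
    have : A' * C' - B' ^ 2 = (A * C - B ^ 2) * (y₁ * t - z₁ * s) ^ 2 := by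
      rw [hA', hB', hC']; ring
    rw [this, hts]; ring
  have hA'ne : A' ≠ 0 := by
    intro h
    rw [h, abs_zero] at habs1
    omega
  obtain ⟨Y, hY⟩ := round_div A' B' hA'ne
  set w1 : ℤ := y₁ * Y + s with hw1
  set w2 : ℤ := z₁ * Y + t with hw2
  have hwne : ¬(w1 = 0 ∧ w2 = 0) := by
    rintro ⟨e1, e2⟩
    have : (1:ℤ) = 0 := by
      rw [hw1] at e1; rw [hw2] at e2
      linear_combination y₁ * e2 - z₁ * e1 - hts
    omega
  have hval : A' * (A * w1 ^ 2 + 2 * B * w1 * w2 + C * w2 ^ 2) =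
      (A' * Y + B') ^ 2 + (A' * C' - B' ^ 2) := by
    rw [hw1, hw2, hA', hB', hC']; ring
  rw [hdisc] at hval
  set D : ℤ := A * C - B ^ 2 with hD
  set Gw : ℤ := A * w1 ^ 2 + 2 * B * w1 * w2 + C * w2 ^ 2 with hGw
  have hminw : m ≤ |Gw| := hmin w1 w2 hwne
  have e1 : m * |Gw| = |(A' * Y + B') ^ 2 + D| := by
    rw [← hval, abs_mul, habs1]
  have e2 : |(A' * Y + B') ^ 2 + D| ≤ (A' * Y + B') ^ 2 + |D| := by
    calc |(A' * Y + B') ^ 2 + D| ≤ |(A' * Y + B') ^ 2| + |D| := abs_add_le _ _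
    _ = (A' * Y + B') ^ 2 + |D| := by rw [abs_of_nonneg (sq_nonneg _)]
  have e3 : 4 * (A' * Y + B') ^ 2 ≤ m ^ 2 := by
    rw [habs1] at hY
    have h1 := mul_self_le_mul_self (by positivity : (0:ℤ) ≤ 2 * |A' * Y + B'|) hY
    calc 4 * (A' * Y + B') ^ 2 = (2 * |A' * Y + B'|) * (2 * |A' * Y + B'|) := by
          rw [← sq_abs (A' * Y + B')]; ring
    _ ≤ m * m := h1
    _ = m ^ 2 := (sq m).symm
  have e4 : m ^ 2 ≤ m * |Gw| := by
    have h0m : 0 ≤ m := by linarith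
    calc m ^ 2 = m * m := sq m
    _ ≤ m * |Gw| := mul_le_mul_of_nonneg_left hminw h0m
  have e5 : m * |Gw| ≤ (A' * Y + B') ^ 2 + |D| := by rw [e1]; exact e2
  have key : 3 * m ^ 2 ≤ 4 * |D| := by linarith
  refine ⟨y₁, z₁, h1ne, ?_⟩
  calc 3 * (A * y₁ ^ 2 + 2 * B * y₁ * z₁ + C * z₁ ^ 2) ^ 2 = 3 * A' ^ 2 := by rw [hA']
  _ = 3 * m ^ 2 := by rw [← sq_abs A', habs1]
  _ ≤ 4 * |D| := key
  _ = 4 * |A * C - B ^ 2| := by rw [hD]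

/-- The value of the quadratic form attached to `M` at `v`. -/
def qv (M : Matrix (Fin 3) (Fin 3) ℤ) (v : Fin 3 → ℤ) : ℤ := v ⬝ᵥ M.mulVec v

lemma qv_eq (M : Matrix (Fin 3) (Fin 3) ℤ) (v : Fin 3 → ℤ) :
    qv M v = M 0 0 * v 0 * v 0 + M 0 1 * v 0 * v 1 + M 0 2 * v 0 * v 2
      + M 1 0 * v 1 * v 0 + M 1 1 * v 1 * v 1 + M 1 2 * v 1 * v 2
      + M 2 0 * v 2 * v 0 + M 2 1 * v 2 * v 1 + M 2 2 * v 2 * v 2 := by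
  simp [qv, dotProduct, Matrix.mulVec, Fin.sum_univ_three]
  ring

lemma qv_conj (g M : Matrix (Fin 3) (Fin 3) ℤ) (t : Fin 3 → ℤ) :
    qv (g * M * gᵀ) t = qv M (gᵀ.mulVec t) := by
  simp [qv, Matrix.mul_apply, Matrix.mulVec, dotProduct, Matrix.transpose_apply,
    Fin.sum_univ_three]
  ring

lemma disc_identity (A u v P w R : ℤ) :
    (A * P - u ^ 2) * (A * R - v ^ 2) - (A * w - u * v) ^ 2
      = A * (A * P * R - A * w * w - u * u * R + u * w * v + v * u * w - v * P * v) := by ring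

lemma square_identity (A u v P w R X Y Z : ℤ) :
    A * (A * X ^ 2 + P * Y ^ 2 + R * Z ^ 2 + 2 * u * X * Y + 2 * v * X * Z + 2 * w * Y * Z)
      = (A * X + u * Y + v * Z) ^ 2
        + ((A * P - u ^ 2) * Y ^ 2 + 2 * (A * w - u * v) * Y * Z + (A * R - v ^ 2) * Z ^ 2) := by
  ring

/-- An even integer ternary form of determinant `-2` is isotropic. -/
lemma isotropy (a11 a12 a13 a22 a23 a33 : ℤ)
    (hdet : (!![2*a11, a12, a13; a12, 2*a22, a23; a13, a23, 2*a33] :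
      Matrix (Fin 3) (Fin 3) ℤ).det = -2) :
    ∃ v : Fin 3 → ℤ, v ≠ 0 ∧
      qv !![2*a11, a12, a13; a12, 2*a22, a23; a13, a23, 2*a33] v = 0 := by
  set Bm : Matrix (Fin 3) (Fin 3) ℤ :=
    !![2*a11, a12, a13; a12, 2*a22, a23; a13, a23, 2*a33] with hBm
  by_contra hcon
  push_neg at hcon
  -- the minimum of |qv Bm| over nonzero vectors
  set S : Set ℕ := {n | ∃ v : Fin 3 → ℤ, v ≠ 0 ∧ (qv Bm v).natAbs = n} with hS
  have hne : S.Nonempty := by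
    refine ⟨(qv Bm ![1,0,0]).natAbs, ![1,0,0], ?_, rfl⟩
    intro h
    have := congrFun h 0
    simp at this
  obtain ⟨v₀, hv₀ne, hMv₀⟩ := Nat.sInf_mem hne
  set M : ℕ := sInf S with hMdef
  set m : ℤ := (M : ℤ) with hm
  have habs0 : |qv Bm v₀| = m := by rw [← Int.natCast_natAbs, hMv₀]
  have hmin : ∀ v : Fin 3 → ℤ, v ≠ 0 → m ≤ |qv Bm v| := by
    intro v hv
    have h1 : M ≤ (qv Bm v).natAbs := Nat.sInf_le ⟨v, hv, rfl⟩
    rw [← Int.natCast_natAbs, hm]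
    exact_mod_cast h1
  -- qv Bm is always even
  have heven : ∀ v : Fin 3 → ℤ, qv Bm v =
      2 * (a11*(v 0)^2 + a22*(v 1)^2 + a33*(v 2)^2
        + a12*(v 0)*(v 1) + a13*(v 0)*(v 2) + a23*(v 1)*(v 2)) := by
    intro v
    rw [qv_eq]
    simp [hBm]
    ring
  have hm0 : m ≠ 0 := by
    intro h0
    apply hcon v₀ hv₀ne
    have := habs0
    rw [h0, abs_eq_zero] at this
    exact this
  have hmge2 : 2 ≤ m := by
    have h2 : 2 ∣ m := by
      rw [← habs0, heven v₀, abs_mul]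
      have h4 : |(2:ℤ)| = 2 := by norm_num
      rw [h4]
      exact dvd_mul_right 2 _
    have : 0 ≤ m := by rw [hm]; exact_mod_cast Nat.zero_le M
    omega
  -- primitivize the minimizer
  have hnz : ¬(v₀ 0 = 0 ∧ v₀ 1 = 0 ∧ v₀ 2 = 0) := by
    rintro ⟨h1, h2, h3⟩
    apply hv₀ne
    funext i
    fin_cases i <;> assumption
  obtain ⟨k, x₁, y₁, z₁, hk, hx, hy, hz, hgcd⟩ := gcd3_split (v₀ 0) (v₀ 1) (v₀ 2) hnz
  set v₁ : Fin 3 → ℤ := ![x₁, y₁, z₁] with hv₁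
  have hv₁ne : v₁ ≠ 0 := by
    intro h
    apply hv₀ne
    have e0 : x₁ = 0 := by have := congrFun h 0; simpa [hv₁] using this
    have e1 : y₁ = 0 := by have := congrFun h 1; simpa [hv₁] using this
    have e2 : z₁ = 0 := by have := congrFun h 2; simpa [hv₁] using this
    funext i
    fin_cases i <;> simp [hx, hy, hz, e0, e1, e2]
  have hscale : qv Bm v₀ = k ^ 2 * qv Bm v₁ := by
    rw [qv_eq, qv_eq, hx, hy, hz]
    simp [hv₁]
    ring
  have habs1 : |qv Bm v₁| = m := by
    have e1 : m = k ^ 2 * |qv Bm v₁| := by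
      rw [← habs0, hscale, abs_mul, abs_of_nonneg (by positivity : (0:ℤ) ≤ k ^ 2)]
    have hminA' : m ≤ |qv Bm v₁| := hmin v₁ hv₁ne
    have hk1 : (1:ℤ) ≤ k := hk
    have hk2 : 1 ≤ k ^ 2 := by
      calc (1:ℤ) = 1 * 1 := (one_mul 1).symm
      _ ≤ k * k := mul_le_mul hk1 hk1 zero_le_one (by linarith)
      _ = k ^ 2 := (sq k).symm
    have e2 : 1 * |qv Bm v₁| ≤ k ^ 2 * |qv Bm v₁| :=
      mul_le_mul_of_nonneg_right hk2 (abs_nonneg _)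
    have e3 : |qv Bm v₁| ≤ m := by linarith
    exact le_antisymm e3 hminA'
  -- extend to a basis
  obtain ⟨g₁, hg1det, hg00, hg01, hg02⟩ := prim_ext3 x₁ y₁ z₁ hgcd
  have hg0 : g₁ 0 = v₁ := by
    funext i
    fin_cases i <;> simp [hv₁, hg00, hg01, hg02]
  set C : Matrix (Fin 3) (Fin 3) ℤ := g₁ * Bm * g₁ᵀ with hC
  have hBmsym : Bmᵀ = Bm := by
    ext i j
    fin_cases i <;> fin_cases j <;> simp [hBm]
  have hCsym : Cᵀ = C := by
    rw [hC, Matrix.transpose_mul, Matrix.transpose_mul, Matrix.transpose_transpose, hBmsym,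
      Matrix.mul_assoc]
  have h10 : C 1 0 = C 0 1 := by rw [show C 1 0 = Cᵀ 0 1 from rfl, hCsym]
  have h20 : C 2 0 = C 0 2 := by rw [show C 2 0 = Cᵀ 0 2 from rfl, hCsym]
  have h21 : C 2 1 = C 1 2 := by rw [show C 2 1 = Cᵀ 1 2 from rfl, hCsym]
  -- identify basis vectors
  have hbasis : ∀ i : Fin 3, ∀ t : Fin 3 → ℤ, g₁ᵀ.mulVec t = fun kk => t 0 * g₁ 0 kk + t 1 * g₁ 1 kk + t 2 * g₁ 2 kk := by
    intro i t
    funext kk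
    simp [Matrix.mulVec, dotProduct, Matrix.transpose_apply, Fin.sum_univ_three]
    ring
  have hCqv : ∀ t : Fin 3 → ℤ, qv C t = qv Bm (g₁ᵀ.mulVec t) := fun t => qv_conj g₁ Bm t
  -- C 0 0 = qv Bm v₁, |C 0 0| = m
  have hC00 : C 0 0 = qv Bm v₁ := by
    have e1 : qv C ![1,0,0] = C 0 0 := by rw [qv_eq]; simp
    have e2 : g₁ᵀ.mulVec ![1,0,0] = v₁ := by
      rw [hbasis 0]
      funext kk
      simp [← hg0]
    rw [← e1, hCqv, e2]
  obtain ⟨A, hA⟩ : ∃ A, C 0 0 = A := ⟨_, rfl⟩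
  obtain ⟨u, hu⟩ : ∃ u, C 0 1 = u := ⟨_, rfl⟩
  obtain ⟨vv, hvv⟩ : ∃ vv, C 0 2 = vv := ⟨_, rfl⟩
  obtain ⟨P, hP⟩ : ∃ P, C 1 1 = P := ⟨_, rfl⟩
  obtain ⟨w, hw⟩ : ∃ w, C 1 2 = w := ⟨_, rfl⟩
  obtain ⟨R, hR⟩ : ∃ R, C 2 2 = R := ⟨_, rfl⟩
  have hAv : A = qv Bm v₁ := by rw [← hA]; exact hC00
  have hAabs : |A| = m := by rw [hAv]; exact habs1
  have hAne : A ≠ 0 := by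
    intro h
    rw [h, abs_zero] at hAabs
    omega
  -- determinant of C
  have hdetC : C.det = -2 := by
    rw [hC, Matrix.det_mul, Matrix.det_mul, Matrix.det_transpose, hg1det, hdet]
    ring
  have hdet9 : A * P * R - A * w * w - u * u * R + u * w * vv + vv * u * w - vv * P * vv = -2 := by
    rw [Matrix.det_fin_three, h10, h20, h21, hA, hu, hvv, hP, hw, hR] at hdetC
    linear_combination hdetC
  -- apply the binary lemma to the complement form
  obtain ⟨y, z, hyzne, hbound⟩ := bin_min (A*P - u^2) (A*w - u*vv) (A*R - vv^2)
  have habsD : |(A*P - u^2) * (A*R - vv^2) - (A*w - u*vv)^2| = 2 * m := by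
    rw [disc_identity, hdet9, abs_mul, hAabs]
    have h4 : |(-2:ℤ)| = 2 := by norm_num
    rw [h4]
    ring
  rw [habsD] at hbound
  obtain ⟨X, hX⟩ := round_div A (u*y + vv*z) hAne
  rw [hAabs] at hX
  have hX' : 2 * |A * X + u * y + vv * z| ≤ m := by
    rw [show A * X + u * y + vv * z = A * X + (u * y + vv * z) by ring]
    exact hX
  -- the new vector
  set wv : Fin 3 → ℤ := g₁ᵀ.mulVec ![X, y, z] with hwv
  have hwvne : wv ≠ 0 := by
    intro h
    have hadj : (g₁ᵀ.adjugate).mulVec wv = ![X, y, z] := by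
      rw [hwv, Matrix.mulVec_mulVec, Matrix.adjugate_mul, Matrix.det_transpose, hg1det]
      funext i
      simp [Matrix.smul_mulVec, Matrix.one_mulVec]
    rw [h] at hadj
    have hy0 : y = 0 := by
      have := congrFun hadj 1
      simpa [Matrix.mulVec_zero] using this.symm
    have hz0 : z = 0 := by
      have := congrFun hadj 2
      simpa [Matrix.mulVec_zero] using this.symm
    exact hyzne ⟨hy0, hz0⟩
  have hFw : qv Bm wv = A * X ^ 2 + P * y ^ 2 + R * z ^ 2
      + 2 * u * X * y + 2 * vv * X * z + 2 * w * y * z := by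
    rw [hwv, ← hCqv ![X, y, z], qv_eq, h10, h20, h21, hA, hu, hvv, hP, hw, hR]
    simp
    ring
  have hsq : A * qv Bm wv = (A*X + u*y + vv*z)^2
      + ((A*P - u^2) * y^2 + 2*(A*w - u*vv)*y*z + (A*R - vv^2)*z^2) := by
    rw [hFw]
    exact square_identity A u vv P w R X y z
  -- the descent inequality
  have hminw : m ≤ |qv Bm wv| := hmin wv hwvne
  have e1 : m * |qv Bm wv| = |(A*X + u*y + vv*z)^2
      + ((A*P - u^2) * y^2 + 2*(A*w - u*vv)*y*z + (A*R - vv^2)*z^2)| := by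
    rw [← hsq, abs_mul, hAabs]
  have e2 : |(A*X + u*y + vv*z)^2
      + ((A*P - u^2) * y^2 + 2*(A*w - u*vv)*y*z + (A*R - vv^2)*z^2)|
      ≤ (A*X + u*y + vv*z)^2 + |(A*P - u^2) * y^2 + 2*(A*w - u*vv)*y*z + (A*R - vv^2)*z^2| := by
    calc |(A*X + u*y + vv*z)^2
      + ((A*P - u^2) * y^2 + 2*(A*w - u*vv)*y*z + (A*R - vv^2)*z^2)|
        ≤ |(A*X + u*y + vv*z)^2|
          + |(A*P - u^2) * y^2 + 2*(A*w - u*vv)*y*z + (A*R - vv^2)*z^2| := abs_add_le _ _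
    _ = (A*X + u*y + vv*z)^2
          + |(A*P - u^2) * y^2 + 2*(A*w - u*vv)*y*z + (A*R - vv^2)*z^2| := by
        rw [abs_of_nonneg (sq_nonneg _)]
  have e3 : 4 * (A*X + u*y + vv*z)^2 ≤ m^2 := by
    have h1 := mul_self_le_mul_self
      (by positivity : (0:ℤ) ≤ 2 * |A*X + u*y + vv*z|) hX'
    calc 4 * (A*X + u*y + vv*z)^2
        = (2*|A*X + u*y + vv*z|) * (2*|A*X + u*y + vv*z|) := by
          rw [← sq_abs (A*X + u*y + vv*z)]; ring
    _ ≤ m * m := h1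
    _ = m^2 := (sq m).symm
  have e4 : m^2 ≤ m * |qv Bm wv| := by
    have h0m : 0 ≤ m := by linarith
    calc m^2 = m * m := sq m
    _ ≤ m * |qv Bm wv| := mul_le_mul_of_nonneg_left hminw h0m
  have e5 : m * |qv Bm wv| ≤ (A*X + u*y + vv*z)^2
      + |(A*P - u^2) * y^2 + 2*(A*w - u*vv)*y*z + (A*R - vv^2)*z^2| := by
    rw [e1]; exact e2
  have e6 : 3 * m^2 ≤ 4 * |(A*P - u^2) * y^2 + 2*(A*w - u*vv)*y*z + (A*R - vv^2)*z^2| := by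
    linarith
  have e7 : 9 * m^4 ≤ 16 * ((A*P - u^2) * y^2 + 2*(A*w - u*vv)*y*z + (A*R - vv^2)*z^2)^2 := by
    have h1 := mul_self_le_mul_self (by positivity : (0:ℤ) ≤ 3 * m^2) e6
    calc 9 * m^4 = (3*m^2) * (3*m^2) := by ring
    _ ≤ (4*|(A*P - u^2) * y^2 + 2*(A*w - u*vv)*y*z + (A*R - vv^2)*z^2|)
        * (4*|(A*P - u^2) * y^2 + 2*(A*w - u*vv)*y*z + (A*R - vv^2)*z^2|) := h1
    _ = 16 * ((A*P - u^2) * y^2 + 2*(A*w - u*vv)*y*z + (A*R - vv^2)*z^2)^2 := by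
        rw [← sq_abs ((A*P - u^2) * y^2 + 2*(A*w - u*vv)*y*z + (A*R - vv^2)*z^2)]; ring
  have e8 : 27 * m^4 ≤ 128 * m := by
    have hb2 : 3 * ((A*P - u^2) * y^2 + 2*(A*w - u*vv)*y*z + (A*R - vv^2)*z^2)^2
        ≤ 4 * (2 * m) := by
      calc 3 * ((A*P - u^2) * y^2 + 2*(A*w - u*vv)*y*z + (A*R - vv^2)*z^2)^2
          = 3 * ((A*P - u^2) * y^2 + 2*((A*w - u*vv))*y*z + (A*R - vv^2)*z^2)^2 := by ring
      _ ≤ 4 * (2 * m) := hbound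
    linarith
  have c1 : (8:ℤ) ≤ m^3 := by
    calc (8:ℤ) = 2^3 := by norm_num
    _ ≤ m^3 := pow_le_pow_left₀ (by norm_num) hmge2 3
  have c2 : 8 * m ≤ m^3 * m := mul_le_mul_of_nonneg_right c1 (by linarith)
  have c3 : m^3 * m = m^4 := by ring
  linarith

lemma qv_even (a11 a12 a13 a22 a23 a33 : ℤ) (v : Fin 3 → ℤ) :
    qv !![2*a11, a12, a13; a12, 2*a22, a23; a13, a23, 2*a33] v =
      2 * (a11*(v 0)^2 + a22*(v 1)^2 + a33*(v 2)^2
        + a12*(v 0)*(v 1) + a13*(v 0)*(v 2) + a23*(v 1)*(v 2)) := by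
  rw [qv_eq]
  simp
  ring

/-- Main integral reduction: an even ternary form of determinant `-2` is equivalent to
`!![0,-1,0; -1,0,0; 0,0,2]`. -/
lemma key_reduction (a11 a12 a13 a22 a23 a33 : ℤ)
    (hdet : (!![2*a11, a12, a13; a12, 2*a22, a23; a13, a23, 2*a33] :
      Matrix (Fin 3) (Fin 3) ℤ).det = -2) :
    ∃ g : Matrix (Fin 3) (Fin 3) ℤ, g.det = 1 ∧
      g * !![2*a11, a12, a13; a12, 2*a22, a23; a13, a23, 2*a33] * gᵀ
        = !![0, -1, 0; -1, 0, 0; 0, 0, 2] := by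
  set Bm : Matrix (Fin 3) (Fin 3) ℤ :=
    !![2*a11, a12, a13; a12, 2*a22, a23; a13, a23, 2*a33] with hBm
  obtain ⟨v₀, hv₀ne, hv₀⟩ := isotropy a11 a12 a13 a22 a23 a33 hdet
  -- primitivize
  have hnz : ¬(v₀ 0 = 0 ∧ v₀ 1 = 0 ∧ v₀ 2 = 0) := by
    rintro ⟨h1, h2, h3⟩
    apply hv₀ne
    funext i
    fin_cases i <;> assumption
  obtain ⟨k, x₁, y₁, z₁, hk, hx, hy, hz, hgcd⟩ := gcd3_split (v₀ 0) (v₀ 1) (v₀ 2) hnz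
  set v₁ : Fin 3 → ℤ := ![x₁, y₁, z₁] with hv₁
  have hscale : qv Bm v₀ = k ^ 2 * qv Bm v₁ := by
    rw [qv_eq, qv_eq, hx, hy, hz]
    simp [hv₁]
    ring
  have hqv1 : qv Bm v₁ = 0 := by
    rw [hv₀, eq_comm] at hscale
    rcases mul_eq_zero.mp hscale with h | h
    · exact absurd h (pow_ne_zero 2 hk.ne')
    · exact h
  obtain ⟨g₁, hg1det, hg00, hg01, hg02⟩ := prim_ext3 x₁ y₁ z₁ hgcd
  have hg0 : g₁ 0 = v₁ := by
    funext i
    fin_cases i <;> simp [hv₁, hg00, hg01, hg02]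
  set C : Matrix (Fin 3) (Fin 3) ℤ := g₁ * Bm * g₁ᵀ with hC
  have hBmsym : Bmᵀ = Bm := by
    ext i j
    fin_cases i <;> fin_cases j <;> simp [hBm]
  have hCsym : Cᵀ = C := by
    rw [hC, Matrix.transpose_mul, Matrix.transpose_mul, Matrix.transpose_transpose, hBmsym,
      Matrix.mul_assoc]
  have h10 : C 1 0 = C 0 1 := by rw [show C 1 0 = Cᵀ 0 1 from rfl, hCsym]
  have h20 : C 2 0 = C 0 2 := by rw [show C 2 0 = Cᵀ 0 2 from rfl, hCsym]
  have h21 : C 2 1 = C 1 2 := by rw [show C 2 1 = Cᵀ 1 2 from rfl, hCsym]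
  have hCqv : ∀ t : Fin 3 → ℤ, qv C t = qv Bm (g₁ᵀ.mulVec t) := fun t => qv_conj g₁ Bm t
  have hbasisvec : ∀ t : Fin 3 → ℤ,
      g₁ᵀ.mulVec t = fun kk => t 0 * g₁ 0 kk + t 1 * g₁ 1 kk + t 2 * g₁ 2 kk := by
    intro t
    funext kk
    simp [Matrix.mulVec, dotProduct, Matrix.transpose_apply, Fin.sum_univ_three]
    ring
  -- C 0 0 = 0
  have hC00 : C 0 0 = 0 := by
    have e1 : qv C ![1,0,0] = C 0 0 := by rw [qv_eq]; simp
    have e2 : g₁ᵀ.mulVec ![1,0,0] = v₁ := by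
      rw [hbasisvec]
      funext kk
      simp [← hg0]
    rw [← e1, hCqv, e2, hqv1]
  -- even diagonal entries
  obtain ⟨d, hd⟩ : ∃ d, C 1 1 = 2 * d := by
    have e1 : qv C ![0,1,0] = C 1 1 := by rw [qv_eq]; simp
    exact ⟨_, by rw [← e1, hCqv]; exact qv_even a11 a12 a13 a22 a23 a33 _⟩
  obtain ⟨f, hf⟩ : ∃ f, C 2 2 = 2 * f := by
    have e1 : qv C ![0,0,1] = C 2 2 := by rw [qv_eq]; simp
    exact ⟨_, by rw [← e1, hCqv]; exact qv_even a11 a12 a13 a22 a23 a33 _⟩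
  obtain ⟨b, hb⟩ : ∃ b, C 0 1 = b := ⟨_, rfl⟩
  obtain ⟨c, hc⟩ : ∃ c, C 0 2 = c := ⟨_, rfl⟩
  obtain ⟨e, he⟩ : ∃ e, C 1 2 = e := ⟨_, rfl⟩
  -- determinant relation
  have hdetC : C.det = -2 := by
    rw [hC, Matrix.det_mul, Matrix.det_mul, Matrix.det_transpose, hg1det, hdet]
    ring
  have hkey : b^2*f - b*c*e + c^2*d = 1 := by
    rw [Matrix.det_fin_three, h10, h20, h21, hC00, hb, hc, hd, he, hf] at hdetC
    have h2 : 2*(b^2*f - b*c*e + c^2*d) = 2*1 := by linear_combination -hdetC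
    exact mul_left_cancel₀ two_ne_zero h2
  -- gcd b c = 1 and Bezout
  have hgl : ((Int.gcd b c : ℤ)) ∣ 1 := by
    rw [show (1:ℤ) = b*(b*f - c*e) + c*(c*d) from by linear_combination -hkey]
    exact dvd_add (Dvd.dvd.mul_right (Int.gcd_dvd_left _ _) _) (Dvd.dvd.mul_right (Int.gcd_dvd_right _ _) _)
  have hgl1 : (Int.gcd b c : ℤ) = 1 := Int.eq_one_of_dvd_one (by positivity) hgl
  obtain ⟨u, v, huv⟩ : ∃ u v : ℤ, b * u + c * v = 1 := by
    refine ⟨Int.gcdA b c, Int.gcdB b c, ?_⟩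
    rw [← hgl1]
    exact (Int.gcd_eq_gcd_ab b c).symm
  -- explicit form of C
  have hCm : C = !![0, b, c; b, 2*d, e; c, e, 2*f] := by
    ext i j
    fin_cases i <;> fin_cases j <;>
      simp only [Matrix.cons_val', Matrix.cons_val_zero, Matrix.cons_val_one, Matrix.head_cons,
        Matrix.empty_val', Matrix.cons_val_fin_one, Matrix.head_fin_const, Matrix.cons_val_two,
        Matrix.tail_cons] <;>
      first
        | exact hC00 | exact hb | exact hc | exact (h10.trans hb) | exact hd | exact he
        | exact (h20.trans hc) | exact (h21.trans he) | exact hf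
  -- second transformation
  set δ : ℤ := d*u^2 + e*u*v + f*v^2 with hδ
  set ε : ℤ := b*e*u + 2*b*f*v - 2*c*d*u - c*e*v with hε
  have hT2 : (!![1,0,0; 0,-u,-v; 0,c,-b] : Matrix (Fin 3) (Fin 3) ℤ)ᵀ =
      !![1,0,0; 0,-u,c; 0,-v,-b] := by
    ext i j
    fin_cases i <;> fin_cases j <;> rfl
  have hD : !![1,0,0; 0,-u,-v; 0,c,-b] * !![0, b, c; b, 2*d, e; c, e, 2*f] *
      (!![1,0,0; 0,-u,-v; 0,c,-b])ᵀ = !![0, -1, 0; -1, 2*δ, ε; 0, ε, 2] := by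
    rw [hT2, Matrix.mul_fin_three, Matrix.mul_fin_three]
    ext i j
    fin_cases i <;> fin_cases j <;> (try simp [hδ, hε])
    all_goals (try ring)
    all_goals (try linear_combination huv)
    all_goals (try linear_combination -huv)
    all_goals (try linear_combination 2*hkey)
  have hT3 : (!![1,0,0; δ,1,0; ε,0,1] : Matrix (Fin 3) (Fin 3) ℤ)ᵀ =
      !![1,δ,ε; 0,1,0; 0,0,1] := by
    ext i j
    fin_cases i <;> fin_cases j <;> rfl
  have hE : !![1,0,0; δ,1,0; ε,0,1] * !![0, -1, 0; -1, 2*δ, ε; 0, ε, 2] *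
      (!![1,0,0; δ,1,0; ε,0,1])ᵀ = !![0, -1, 0; -1, 0, 0; 0, 0, 2] := by
    rw [hT3, Matrix.mul_fin_three, Matrix.mul_fin_three]
    ext i j
    fin_cases i <;> fin_cases j <;> (try simp)
    all_goals first | rfl | ring
  -- assemble
  refine ⟨!![1,0,0; δ,1,0; ε,0,1] * !![1,0,0; 0,-u,-v; 0,c,-b] * g₁, ?_, ?_⟩
  · rw [Matrix.det_mul, Matrix.det_mul, hg1det]
    have d3 : (!![1,0,0; δ,1,0; ε,0,1] : Matrix (Fin 3) (Fin 3) ℤ).det = 1 := by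
      rw [Matrix.det_fin_three]
      simp
    have d2 : (!![1,0,0; 0,-u,-v; 0,c,-b] : Matrix (Fin 3) (Fin 3) ℤ).det = 1 := by
      rw [Matrix.det_fin_three]
      simp
      linear_combination huv
    rw [d3, d2]
    ring
  · calc !![1,0,0; δ,1,0; ε,0,1] * !![1,0,0; 0,-u,-v; 0,c,-b] * g₁ * Bm *
        (!![1,0,0; δ,1,0; ε,0,1] * !![1,0,0; 0,-u,-v; 0,c,-b] * g₁)ᵀ
        = !![1,0,0; δ,1,0; ε,0,1] * (!![1,0,0; 0,-u,-v; 0,c,-b] * (g₁ * Bm * g₁ᵀ) *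
            (!![1,0,0; 0,-u,-v; 0,c,-b])ᵀ) * (!![1,0,0; δ,1,0; ε,0,1])ᵀ := by
          rw [Matrix.transpose_mul, Matrix.transpose_mul]
          simp only [Matrix.mul_assoc]
    _ = !![0, -1, 0; -1, 0, 0; 0, 0, 2] := by
          rw [← hC, hCm, hD, hE]


open Matrix

/-- The matrix `A₀ = [[0, −1/2, 0], [−1/2, 0, 0], [0, 0, 1]]`. -/
noncomputable def A0 : Matrix (Fin 3) (Fin 3) ℚ :=
  !![0, -1/2, 0; -1/2, 0, 0; 0, 0, 1]

/-- Every integer-valued ternary quadratic form (a symmetric 3×3 matrix with integer diagonal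
entries and half-integer off-diagonal entries) of determinant `−1/4` is `SL₃(ℤ)`-equivalent to
`A₀`: there is `g ∈ SL₃(ℤ)` with `g A gᵀ = A₀`. -/
theorem ternary_form_det_neg_quarter_equiv_A0 (a11 a12 a13 a22 a23 a33 : ℤ) :
    let A : Matrix (Fin 3) (Fin 3) ℚ :=
      !![(a11:ℚ), (a12:ℚ)/2, (a13:ℚ)/2;
         (a12:ℚ)/2, (a22:ℚ), (a23:ℚ)/2;
         (a13:ℚ)/2, (a23:ℚ)/2, (a33:ℚ)]
    A.det = -1/4 →
      ∃ g : Matrix (Fin 3) (Fin 3) ℤ, g.det = 1 ∧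
        (g.map (Int.cast : ℤ → ℚ)) * A * (g.map (Int.cast : ℤ → ℚ))ᵀ = A0 := by
  intro A hdet
  -- integral determinant condition for the doubled matrix
  have hdetZ : (!![2*a11, a12, a13; a12, 2*a22, a23; a13, a23, 2*a33] :
      Matrix (Fin 3) (Fin 3) ℤ).det = -2 := by
    rw [Matrix.det_fin_three] at hdet ⊢
    try simp only [A] at hdet
    try simp at hdet
    try simp
    have h2 : ((2*a11 * (2*a22 * (2*a33)) - 2*a11 * a23 * a23 - a12 * (a12 * (2*a33))
        + a12 * a23 * a13 + a13 * (a12 * a23) - a13 * (2*a22) * a13 : ℤ) : ℚ) = ((-2 : ℤ) : ℚ) := by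
      push_cast
      linear_combination 8 * hdet
    have h3 : (2*a11 * (2*a22 * (2*a33)) - 2*a11 * a23 * a23 - a12 * (a12 * (2*a33))
        + a12 * a23 * a13 + a13 * (a12 * a23) - a13 * (2*a22) * a13 : ℤ) = -2 := by
      exact_mod_cast h2
    linear_combination h3
  obtain ⟨g, hgdet, hg⟩ := key_reduction a11 a12 a13 a22 a23 a33 hdetZ
  refine ⟨g, hgdet, ?_⟩
  have hA2 : A = (1/2 : ℚ) • ((!![2*a11, a12, a13; a12, 2*a22, a23; a13, a23, 2*a33] :
      Matrix (Fin 3) (Fin 3) ℤ).map (Int.cast : ℤ → ℚ)) := by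
    ext i j
    fin_cases i <;> fin_cases j <;>
      simp [A, Matrix.map_apply] <;> push_cast <;> ring
  have hmapmul : ((g * !![2*a11, a12, a13; a12, 2*a22, a23; a13, a23, 2*a33] * gᵀ).map
      (Int.cast : ℤ → ℚ)) =
      g.map (Int.cast : ℤ → ℚ) *
        ((!![2*a11, a12, a13; a12, 2*a22, a23; a13, a23, 2*a33] :
          Matrix (Fin 3) (Fin 3) ℤ).map (Int.cast : ℤ → ℚ)) * (g.map (Int.cast : ℤ → ℚ))ᵀ := by
    rw [show (Int.cast : ℤ → ℚ) = ⇑(Int.castRingHom ℚ) from rfl]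
    rw [Matrix.map_mul, Matrix.map_mul, ← Matrix.transpose_map]
  calc g.map (Int.cast : ℤ → ℚ) * A * (g.map (Int.cast : ℤ → ℚ))ᵀ
      = (1/2 : ℚ) • (g.map (Int.cast : ℤ → ℚ) *
        ((!![2*a11, a12, a13; a12, 2*a22, a23; a13, a23, 2*a33] :
          Matrix (Fin 3) (Fin 3) ℤ).map (Int.cast : ℤ → ℚ)) * (g.map (Int.cast : ℤ → ℚ))ᵀ) := by
        rw [hA2, Matrix.mul_smul, Matrix.smul_mul]
  _ = (1/2 : ℚ) • ((g * !![2*a11, a12, a13; a12, 2*a22, a23; a13, a23, 2*a33] * gᵀ).map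
        (Int.cast : ℤ → ℚ)) := by rw [hmapmul]
  _ = (1/2 : ℚ) • ((!![0, -1, 0; -1, 0, 0; 0, 0, 2] : Matrix (Fin 3) (Fin 3) ℤ).map
        (Int.cast : ℤ → ℚ)) := by rw [hg]
  _ = A0 := by
        ext i j
        fin_cases i <;> fin_cases j <;>
          simp [A0, Matrix.map_apply, Matrix.vecHead, Matrix.vecTail] <;> norm_num
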